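/- Let X and Y be complex vector spaces and let D : X → Y be an additive map (D(x + y) = D(x) + D(y) for all x, y) such that D(μ x) = μ D(x) for every complex number μ of modulus 1 and every x ∈ X. Then D is ℂ-linear: D(λ x) = λ D(x) for all λ ∈ ℂ and x ∈ X. -/

import Mathlib

/-- An additive map between complex vector spaces that is homogeneous with respect to every
complex scalar of modulus one is `ℂ`-linear. -/
theorem additive_circle_homogeneous_is_linear
    {X Y : Type*} [AddCommGroup X] [Module ℂ X] [AddCommGroup Y] [Module ℂ Y]
    (D : X → Y)
    (hadd : ∀ x y : X, D (x + y) = D x + D y)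
    (hT : ∀ μ : ℂ, ‖μ‖ = 1 → ∀ x : X, D (μ • x) = μ • D x) :
    ∀ (c : ℂ) (x : X), D (c • x) = c • D x := by
  set D' : X →+ Y := AddMonoidHom.mk' D hadd with hD'
  have hD0 : D 0 = 0 := D'.map_zero
  have hnat : ∀ (n : ℕ) (x : X), D (n • x) = n • D x := fun n x => D'.map_nsmul n x
  -- Step 1: the result for ‖c‖ ≤ 2
  have key : ∀ c : ℂ, ‖c‖ ≤ 2 → ∀ x : X, D (c • x) = c • D x := by
    intro c hc x
    rcases eq_or_ne c 0 with rfl | hc0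
    · simp [hD0]
    · have hcn : (0:ℝ) < ‖c‖ := norm_pos_iff.mpr hc0
      set a : ℝ := ‖c‖ / 2 with ha
      set s : ℝ := Real.sqrt (1 - a ^ 2) with hs
      have ha2 : a ^ 2 ≤ 1 := by
        have : a ≤ 1 := by
          rw [ha]; linarith
        nlinarith [hcn, this]
      have hs2 : s ^ 2 = 1 - a ^ 2 := Real.sq_sqrt (by linarith)
      set u : ℂ := c / ‖c‖ with hu
      have hunorm : ‖u‖ = 1 := by
        rw [hu, norm_div]
        simp only [Complex.norm_real, Real.norm_eq_abs, abs_of_pos hcn]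
        exact div_self hcn.ne'
      set μ₁ : ℂ := u * (a + s * Complex.I) with hμ₁
      set μ₂ : ℂ := u * (a - s * Complex.I) with hμ₂
      have habs : ∀ b : ℝ, ‖(a : ℂ) + b * Complex.I‖ = Real.sqrt (a ^ 2 + b ^ 2) := by
        intro b
        rw [Complex.norm_add_mul_I]
      have hn1 : ‖μ₁‖ = 1 := by
        rw [hμ₁, norm_mul, hunorm, one_mul, habs s, hs2]
        simp
      have hn2 : ‖μ₂‖ = 1 := by
        rw [hμ₂, norm_mul, hunorm, one_mul, sub_eq_add_neg, ← neg_mul]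
        have h := habs (-s)
        push_cast at h
        rw [h, neg_sq, hs2]
        simp
      have hsum : μ₁ + μ₂ = c := by
        have hne : (‖c‖ : ℂ) ≠ 0 := by exact_mod_cast hcn.ne'
        have h2a : μ₁ + μ₂ = u * (2 * a) := by rw [hμ₁, hμ₂]; ring
        rw [h2a, hu, ha]
        push_cast
        field_simp
      calc D (c • x) = D (μ₁ • x + μ₂ • x) := by rw [← add_smul, hsum]
        _ = D (μ₁ • x) + D (μ₂ • x) := hadd _ _
        _ = μ₁ • D x + μ₂ • D x := by rw [hT μ₁ hn1, hT μ₂ hn2]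
        _ = c • D x := by rw [← add_smul, hsum]
  -- Step 2: general c
  intro c x
  set n : ℕ := ⌈‖c‖⌉₊ + 1 with hn'
  have hnpos : (0:ℝ) < n := by positivity
  have hnne : (n : ℂ) ≠ 0 := by exact_mod_cast hnpos.ne'
  have hle : ‖c / n‖ ≤ 2 := by
    rw [norm_div]
    have h1 : ‖c‖ ≤ n := by
      calc ‖c‖ ≤ ⌈‖c‖⌉₊ := Nat.le_ceil _
        _ ≤ n := by exact_mod_cast Nat.le_succ _
    have h2 : ‖(n : ℂ)‖ = (n : ℝ) := by simp
    rw [h2]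
    calc ‖c‖ / n ≤ n / n := by gcongr
      _ = 1 := div_self hnpos.ne'
      _ ≤ 2 := by norm_num
  have hdecomp : c • x = n • ((c / n) • x) := by
    rw [← Nat.cast_smul_eq_nsmul ℂ, smul_smul]
    congr 1
    field_simp
  rw [hdecomp, hnat, key _ hle, ← Nat.cast_smul_eq_nsmul ℂ, smul_smul]
  congr 1
  field_simp
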